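/- Let (Ω, 𝔄, μ) be a measure space with finite measure μ, let 𝕂 be ℝ or ℂ, let p, q ≥ 1, c ∈ L^q(Ω, ℝ) and c₀ ≥ 0. Suppose g : Ω × 𝕂^d → 𝕂^n satisfies the Carathéodory conditions (g(x,·) is continuous for μ-a.a. x ∈ Ω and g(·,z) is μ-measurable for every z ∈ 𝕂^d) and the growth estimate |g(x,z)| ≤ c(x) + c₀|z|^{p/q} for μ-a.a. x ∈ Ω and all z ∈ 𝕂^d. Then the Nemytskii operator 𝒢 : L^p(Ω, 𝕂^d) → L^q(Ω, 𝕂^n), 𝒢(u)(x) := g(x, u(x)), is continuous with respect to the L^p and L^q norms. -/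

import Mathlib

open MeasureTheory Filter Topology

/-- Carathéodory measurability: if `g x ·` is a.e. continuous and `g · z` is strongly
measurable for every `z`, then `x ↦ g x (v x)` is a.e. strongly measurable for any
a.e. strongly measurable `v`. -/
lemma nemytskii_aestronglyMeasurable {𝕂 : Type*} [RCLike 𝕂] {Ω : Type*} [MeasurableSpace Ω]
    {μ : Measure Ω} {d n : ℕ}
    (g : Ω → EuclideanSpace 𝕂 (Fin d) → EuclideanSpace 𝕂 (Fin n))
    (hgcont : ∀ᵐ x ∂μ, Continuous (g x))
    (hgmeas : ∀ z : EuclideanSpace 𝕂 (Fin d), StronglyMeasurable fun x => g x z)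
    {v : Ω → EuclideanSpace 𝕂 (Fin d)} (hv : AEStronglyMeasurable v μ) :
    AEStronglyMeasurable (fun x => g x (v x)) μ := by
  obtain ⟨v', hv', hvv'⟩ := hv
  have hsimple : ∀ s : SimpleFunc Ω (EuclideanSpace 𝕂 (Fin d)),
      StronglyMeasurable fun x => g x (s x) := by
    intro s
    have heq : (fun x => g x (s x))
        = fun x => ∑ z ∈ s.range, (s ⁻¹' {z}).indicator (fun y => g y z) x := by
      funext x
      rw [Finset.sum_eq_single_of_mem (s x) (s.mem_range_self x)]
      · rw [Set.indicator_of_mem (by simp : x ∈ s ⁻¹' {s x})]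
      · intro z _ hz
        exact Set.indicator_of_notMem (by simp [Ne.symm hz]) _
    rw [heq]
    exact Finset.stronglyMeasurable_fun_sum _ fun z _ =>
      (hgmeas z).indicator (s.measurableSet_fiber z)
  have key : AEStronglyMeasurable (fun x => g x (v' x)) μ := by
    refine aestronglyMeasurable_of_tendsto_ae atTop
      (fun k => (hsimple (hv'.approx k)).aestronglyMeasurable) ?_
    filter_upwards [hgcont] with x hx
    exact (hx.tendsto (v' x)).comp (hv'.tendsto_approx x)
  exact key.congr (hvv'.mono fun x hx => by simp only [hx])

/-- continuity of the Nemytskii operator `𝒢 : L^p → L^q`,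
Proposition B.2: under Carathéodory conditions and the growth estimate
`|g(x,z)| ≤ c(x) + c₀|z|^{p/q}`, the substitution operator `u ↦ g(·, u(·))`
is continuous from `L^p(Ω, 𝕂^d)` to `L^q(Ω, 𝕂^n)`. -/
theorem stmt_3 {𝕂 : Type*} [RCLike 𝕂] {Ω : Type*} [MeasurableSpace Ω]
    (μ : Measure Ω) [IsFiniteMeasure μ] (d n : ℕ)
    (p q : ℝ) (hp : 1 ≤ p) (hq : 1 ≤ q)
    (c : Ω → ℝ) (hc : MemLp c (ENNReal.ofReal q) μ)
    (c₀ : ℝ) (hc₀ : 0 ≤ c₀)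
    (g : Ω → EuclideanSpace 𝕂 (Fin d) → EuclideanSpace 𝕂 (Fin n))
    (hgcont : ∀ᵐ x ∂μ, Continuous (g x))
    (hgmeas : ∀ z : EuclideanSpace 𝕂 (Fin d), StronglyMeasurable fun x => g x z)
    (hgrow : ∀ᵐ x ∂μ, ∀ z : EuclideanSpace 𝕂 (Fin d),
      ‖g x z‖ ≤ c x + c₀ * ‖z‖ ^ (p / q)) :
    ∀ u : Ω → EuclideanSpace 𝕂 (Fin d), MemLp u (ENNReal.ofReal p) μ →
      ∀ ε : ℝ, 0 < ε → ∃ δ : ℝ, 0 < δ ∧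
        ∀ v : Ω → EuclideanSpace 𝕂 (Fin d), MemLp v (ENNReal.ofReal p) μ →
          eLpNorm (u - v) (ENNReal.ofReal p) μ < ENNReal.ofReal δ →
          eLpNorm ((fun x => g x (u x)) - fun x => g x (v x)) (ENNReal.ofReal q) μ <
            ENNReal.ofReal ε := by
  have hp0 : (0:ℝ) < p := lt_of_lt_of_le one_pos hp
  have hq0 : (0:ℝ) < q := lt_of_lt_of_le one_pos hq
  have hpq : (0:ℝ) < p / q := div_pos hp0 hq0
  have hP1 : 1 ≤ ENNReal.ofReal p := ENNReal.one_le_ofReal.mpr hp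
  have hQ1 : 1 ≤ ENNReal.ofReal q := ENNReal.one_le_ofReal.mpr hq
  have hPtop : ENNReal.ofReal p ≠ ⊤ := ENNReal.ofReal_ne_top
  have hQtop : ENNReal.ofReal q ≠ ⊤ := ENNReal.ofReal_ne_top
  have hP0 : ENNReal.ofReal p ≠ 0 := (ENNReal.ofReal_pos.mpr hp0).ne'
  have hQP : ENNReal.ofReal q * ENNReal.ofReal (p / q) = ENNReal.ofReal p := by
    rw [← ENNReal.ofReal_mul hq0.le]
    congr 1
    field_simp
  have hrpow : ∀ f : Ω → EuclideanSpace 𝕂 (Fin d),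
      eLpNorm (fun x => ‖f x‖ ^ (p / q)) (ENNReal.ofReal q) μ
        = eLpNorm f (ENNReal.ofReal p) μ ^ (p / q) := fun f => by
    rw [eLpNorm_norm_rpow f hpq, hQP]
  have hmeasr : ∀ {f : Ω → EuclideanSpace 𝕂 (Fin d)}, AEStronglyMeasurable f μ →
      AEStronglyMeasurable (fun x => ‖f x‖ ^ (p / q)) μ := fun hf =>
    (Real.continuous_rpow_const hpq.le).comp_aestronglyMeasurable hf.norm
  have hmemr : ∀ {f : Ω → EuclideanSpace 𝕂 (Fin d)}, MemLp f (ENNReal.ofReal p) μ →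
      MemLp (fun x => ‖f x‖ ^ (p / q)) (ENNReal.ofReal q) μ := fun hf =>
    ⟨hmeasr hf.1, by rw [hrpow]; exact ENNReal.rpow_lt_top_of_nonneg hpq.le hf.2.ne⟩
  have hmemG : ∀ {f : Ω → EuclideanSpace 𝕂 (Fin d)}, MemLp f (ENNReal.ofReal p) μ →
      MemLp (fun x => g x (f x)) (ENNReal.ofReal q) μ := by
    intro f hf
    refine MemLp.of_le (hc.add ((hmemr hf).const_mul c₀))
      (nemytskii_aestronglyMeasurable g hgcont hgmeas hf.1) ?_
    filter_upwards [hgrow] with x hx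
    rw [Real.norm_eq_abs]
    exact (hx (f x)).trans (le_abs_self _)
  intro u hu ε hε
  by_contra hcon
  push_neg at hcon
  have hv' := fun k : ℕ => hcon (1 / ((k : ℝ) + 1)) (by positivity)
  choose v hv1 hv2 hv3 using hv'
  -- L^p convergence of `v k` to `u`
  have hconv : Tendsto (fun k => eLpNorm (v k - u) (ENNReal.ofReal p) μ) atTop (𝓝 0) := by
    have h0 : Tendsto (fun k : ℕ => ENNReal.ofReal (1 / ((k : ℝ) + 1))) atTop (𝓝 0) := by
      rw [show (0 : ENNReal) = ENNReal.ofReal 0 by simp]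
      exact ENNReal.tendsto_ofReal tendsto_one_div_add_atTop_nhds_zero_nat
    refine tendsto_of_tendsto_of_tendsto_of_le_of_le tendsto_const_nhds h0
      (fun k => zero_le) (fun k => ?_)
    rw [eLpNorm_sub_comm]
    exact (hv2 k).le
  have hui_v : UnifIntegrable v (ENNReal.ofReal p) μ :=
    unifIntegrable_of_tendsto_Lp hP1 hPtop hv1 hu hconv
  have hGmeas : ∀ k, AEStronglyMeasurable (fun x => g x (v k x)) μ := fun k =>
    nemytskii_aestronglyMeasurable g hgcont hgmeas (hv1 k).1
  have hGu : MemLp (fun x => g x (u x)) (ENNReal.ofReal q) μ := hmemG hu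
  -- uniform integrability of the image family in L^q
  have hui_G : UnifIntegrable (fun k x => g x (v k x)) (ENNReal.ofReal q) μ := by
    intro ε' hε'
    obtain ⟨δ₂, hδ₂pos, hδ₂⟩ :=
      unifIntegrable_const (μ := μ) (ι := ℕ) hQ1 hQtop hc (half_pos hε')
    set ε₁ : ℝ := (ε' / (2 * (c₀ + 1))) ^ (q / p) with hε₁def
    have hbase : (0:ℝ) < ε' / (2 * (c₀ + 1)) := by positivity
    have hε₁pos : 0 < ε₁ := Real.rpow_pos_of_pos hbase _
    have h1 : ε₁ ^ (p / q) = ε' / (2 * (c₀ + 1)) := by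
      rw [hε₁def, ← Real.rpow_mul hbase.le,
        show q / p * (p / q) = 1 by field_simp, Real.rpow_one]
    have hkey : c₀ * ε₁ ^ (p / q) ≤ ε' / 2 := by
      rw [h1, mul_div_assoc']
      rw [div_le_div_iff₀ (by positivity) (by norm_num)]
      nlinarith [hε'.le, hc₀]
    obtain ⟨δ₁, hδ₁pos, hδ₁⟩ := hui_v hε₁pos
    refine ⟨min δ₁ δ₂, lt_min hδ₁pos hδ₂pos, fun k s hs hμs => ?_⟩
    have hμs1 : μ s ≤ ENNReal.ofReal δ₁ :=
      hμs.trans (ENNReal.ofReal_le_ofReal (min_le_left _ _))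
    have hμs2 : μ s ≤ ENNReal.ofReal δ₂ :=
      hμs.trans (ENNReal.ofReal_le_ofReal (min_le_right _ _))
    set r : Ω → ℝ := fun x => ‖v k x‖ ^ (p / q) with hrdef
    have hrm : AEStronglyMeasurable r μ := hmeasr (hv1 k).1
    have hpart2 : eLpNorm (fun x => c₀ * s.indicator r x) (ENNReal.ofReal q) μ
        ≤ ENNReal.ofReal (ε' / 2) := by
      have heq : (fun x => c₀ * s.indicator r x) = c₀ • s.indicator r := rfl
      rw [heq, eLpNorm_const_smul]
      have h3 : eLpNorm (s.indicator r) (ENNReal.ofReal q) μ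
          = eLpNorm (s.indicator (v k)) (ENNReal.ofReal p) μ ^ (p / q) := by
        have hind : s.indicator r = fun x => ‖s.indicator (v k) x‖ ^ (p / q) := by
          funext x
          by_cases hxs : x ∈ s <;>
            simp [hrdef, hxs, Real.zero_rpow hpq.ne']
        rw [hind, hrpow]
      rw [h3]
      calc ‖c₀‖ₑ * eLpNorm (s.indicator (v k)) (ENNReal.ofReal p) μ ^ (p / q)
          ≤ ‖c₀‖ₑ * (ENNReal.ofReal ε₁) ^ (p / q) := by
            exact mul_le_mul_right
              (ENNReal.rpow_le_rpow (hδ₁ k s hs hμs1) hpq.le) _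
        _ = ENNReal.ofReal c₀ * ENNReal.ofReal (ε₁ ^ (p / q)) := by
            rw [ENNReal.ofReal_rpow_of_pos hε₁pos,
              Real.enorm_eq_ofReal hc₀]
        _ = ENNReal.ofReal (c₀ * ε₁ ^ (p / q)) := (ENNReal.ofReal_mul hc₀).symm
        _ ≤ ENNReal.ofReal (ε' / 2) := ENNReal.ofReal_le_ofReal hkey
    calc eLpNorm (s.indicator fun x => g x (v k x)) (ENNReal.ofReal q) μ
        ≤ eLpNorm (s.indicator fun x => c x + c₀ * r x) (ENNReal.ofReal q) μ := by
          apply eLpNorm_mono_ae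
          filter_upwards [hgrow] with x hx
          by_cases hxs : x ∈ s
          · simp only [Set.indicator_of_mem hxs]
            rw [Real.norm_eq_abs]
            exact (hx (v k x)).trans (le_abs_self _)
          · simp [Set.indicator_of_notMem hxs]
      _ = eLpNorm ((s.indicator c) + fun x => c₀ * s.indicator r x)
            (ENNReal.ofReal q) μ := by
          congr 1
          funext x
          by_cases hxs : x ∈ s <;> simp [hxs]
      _ ≤ eLpNorm (s.indicator c) (ENNReal.ofReal q) μ
            + eLpNorm (fun x => c₀ * s.indicator r x) (ENNReal.ofReal q) μ :=
          eLpNorm_add_le (hc.1.indicator hs) ((hrm.indicator hs).const_mul c₀) hQ1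
      _ ≤ ENNReal.ofReal (ε' / 2) + ENNReal.ofReal (ε' / 2) :=
          add_le_add (hδ₂ k s hs hμs2) hpart2
      _ = ENNReal.ofReal ε' := by
          rw [← ENNReal.ofReal_add (by positivity) (by positivity), add_halves]
  -- L^q convergence of the image sequence via Vitali, along arbitrary subsequences
  have hconvG : Tendsto
      (fun k => eLpNorm ((fun x => g x (v k x)) - fun x => g x (u x))
        (ENNReal.ofReal q) μ) atTop (𝓝 0) := by
    refine tendsto_of_subseq_tendsto fun ns hns => ?_
    have hTIM : TendstoInMeasure μ (fun i => v (ns i)) atTop u := fun δ hδ =>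
      (tendstoInMeasure_of_tendsto_eLpNorm hP0 (fun k => (hv1 k).1) hu.1 hconv δ hδ).comp hns
    obtain ⟨ms, _, hms⟩ := hTIM.exists_seq_tendsto_ae
    refine ⟨ms, ?_⟩
    have haetend : ∀ᵐ x ∂μ,
        Tendsto (fun i => g x (v (ns (ms i)) x)) atTop (𝓝 (g x (u x))) := by
      filter_upwards [hgcont, hms] with x hx1 hx2
      exact (hx1.tendsto (u x)).comp hx2
    have hTIMG : TendstoInMeasure μ (fun i x => g x (v (ns (ms i)) x)) atTop
        (fun x => g x (u x)) :=
      tendstoInMeasure_of_tendsto_ae (fun i => hGmeas _) haetend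
    have hui' : UnifIntegrable (fun i x => g x (v (ns (ms i)) x)) (ENNReal.ofReal q) μ := by
      intro ε'' hε''
      obtain ⟨δ, hδpos, hδ⟩ := hui_G hε''
      exact ⟨δ, hδpos, fun i s hs hμs => hδ _ s hs hμs⟩
    exact tendsto_Lp_finite_of_tendstoInMeasure hQ1 hQtop (fun i => hGmeas _) hGu hui' hTIMG
  obtain ⟨k, hk⟩ :=
    (hconvG.eventually_lt_const (ENNReal.ofReal_pos.mpr hε)).exists
  rw [eLpNorm_sub_comm] at hk
  exact absurd (hv3 k) hk.not_ge
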